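/- Let b be a prime, let m ≥ 1, s ≥ 1 and t be integers with 0 ≤ t ≤ m, and let C_1, …, C_s be infinite matrices over 𝔽_b generating a digital (t,s)-sequence, in the sense that for every integer m' with max(t,1) ≤ m' ≤ m, the upper-left m'×m' submatrices C_1^{(m')}, …, C_s^{(m')} satisfy ρ_{m'}(C_1^{(m')},…,C_s^{(m')}) ≥ m' − t. Let 0 = w_1 ≤ w_2 ≤ ⋯ ≤ w_s be nonnegative integers and let C̃_1, …, C̃_s be the column-row reduced m×m matrices obtained from C_1^{(m)},…,C_s^{(m)}. Then ρ_m(C̃_1,…,C̃_s) ≥ max{0, m − w_s − t}. -/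
import Mathlib


open scoped BigOperators

/-- Linear independence of the system consisting of the first `d j` rows of each matrix `C j`. -/
def rowsLinIndep (b m : ℕ) {ι : Type*} (C : ι → Matrix (Fin m) (Fin m) (ZMod b))
    (d : ι → ℕ) : Prop :=
  LinearIndependent (ZMod b)
    (fun p : {p : ι × Fin m // (p.2 : ℕ) < d p.1} => C p.1.1 p.1.2)

/-- The linear independence parameter `ρ_m(C_1,…,C_s)`: the largest `d ∈ {0,…,m}` such that
for every choice of nonnegative integers `d_j` summing to `d`, the collection of the first `d_j`
rows of the matrices is linearly independent. -/
noncomputable def rho (b m : ℕ) {ι : Type*} [Fintype ι]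
    (C : ι → Matrix (Fin m) (Fin m) (ZMod b)) : ℕ :=
  sSup {d | d ≤ m ∧ ∀ dv : ι → ℕ, (∑ j, dv j) = d → rowsLinIndep b m C dv}

/-- Row reduced matrix: the last `min m w` rows are set to zero. -/
def rowReduced {b m : ℕ} (C : Matrix (Fin m) (Fin m) (ZMod b)) (w : ℕ) :
    Matrix (Fin m) (Fin m) (ZMod b) :=
  Matrix.of fun i r => if (i : ℕ) < m - min m w then C i r else 0

/-- Column-row reduced matrix: the last `min m w` rows and columns are set to zero. -/
def colRowReduced {b m : ℕ} (C : Matrix (Fin m) (Fin m) (ZMod b)) (w : ℕ) :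
    Matrix (Fin m) (Fin m) (ZMod b) :=
  Matrix.of fun i r => if (i : ℕ) < m - min m w ∧ (r : ℕ) < m - min m w then C i r else 0

/-- Reduced matrix with possibly different row/column reduction indices. -/
def colRowReduced' {b m : ℕ} (C : Matrix (Fin m) (Fin m) (ZMod b)) (wr wc : ℕ) :
    Matrix (Fin m) (Fin m) (ZMod b) :=
  Matrix.of fun i r => if (i : ℕ) < m - min m wr ∧ (r : ℕ) < m - min m wc then C i r else 0

/-- Upper-left `m × m` submatrix of an infinite matrix. -/
def upperLeft {b : ℕ} (C : Matrix ℕ ℕ (ZMod b)) (m : ℕ) : Matrix (Fin m) (Fin m) (ZMod b) :=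
  Matrix.of fun i r => C (i : ℕ) (r : ℕ)

/-- The `k`-th coordinate value produced by the digital method with generating matrix `C`. -/
noncomputable def digitalPoint (b m : ℕ) (C : Matrix (Fin m) (Fin m) (ZMod b)) (k : ℕ) : ℝ :=
  ∑ i : Fin m,
    ((C.mulVec fun r : Fin m => ((k / b ^ (r : ℕ)) % b : ZMod b)) i).val
      / (b : ℝ) ^ ((i : ℕ) + 1)

open Classical in
/-- The `b^m` points `P 0, …, P (b^m - 1)` form a `(t,m,|ι|)`-net in base `b` (counted with
multiplicity): every elementary interval of volume `b^(t-m)` contains exactly `b^t` points. -/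
def isNet (b m t : ℕ) {ι : Type*} [Fintype ι] (P : ℕ → ι → ℝ) : Prop :=
  ∀ d a : ι → ℕ, (∀ j, a j < b ^ d j) → (∑ j, d j) = m - t →
    ((Finset.range (b ^ m)).filter fun k =>
        ∀ j, (a j : ℝ) / (b : ℝ) ^ d j ≤ P k j ∧ P k j < ((a j : ℝ) + 1) / (b : ℝ) ^ d j).card
      = b ^ t

lemma rowsLinIndep_mono {b m : ℕ} {ι : Type*} {C : ι → Matrix (Fin m) (Fin m) (ZMod b)}
    {dv dv' : ι → ℕ} (h : ∀ j, dv' j ≤ dv j) (H : rowsLinIndep b m C dv) :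
    rowsLinIndep b m C dv' := by
  have := H.comp (fun p : {p : ι × Fin m // (p.2 : ℕ) < dv' p.1} =>
      (⟨p.1, lt_of_lt_of_le p.2 (h p.1.1)⟩ : {p : ι × Fin m // (p.2 : ℕ) < dv p.1}))
    (fun p q hpq => by
      apply Subtype.ext
      have h := congrArg Subtype.val hpq
      simpa using h)
  exact this

lemma rowsLinIndep_of_le_rho {b m : ℕ} {ι : Type*} [Fintype ι] [Nonempty ι]
    {C : ι → Matrix (Fin m) (Fin m) (ZMod b)} {d : ℕ} (hd : d ≤ rho b m C)
    (dv : ι → ℕ) (hdv : ∑ j, dv j = d) : rowsLinIndep b m C dv := by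
  classical
  unfold rho at hd
  set S := {d | d ≤ m ∧ ∀ dv : ι → ℕ, (∑ j, dv j) = d → rowsLinIndep b m C dv} with hS
  have h0 : (0 : ℕ) ∈ S := by
    refine ⟨Nat.zero_le m, fun dv2 hdv2 => ?_⟩
    have hz : ∀ j, dv2 j = 0 := by
      intro j
      exact (Finset.sum_eq_zero_iff.mp hdv2) j (Finset.mem_univ j)
    have : IsEmpty {p : ι × Fin m // (p.2 : ℕ) < dv2 p.1} := by
      refine ⟨fun p => ?_⟩
      have h2 := p.2
      rw [hz] at h2
      omega
    exact linearIndependent_empty_type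
  have hbdd : BddAbove S := ⟨m, fun x hx => hx.1⟩
  have hmem : sSup S ∈ S := Nat.sSup_mem ⟨0, h0⟩ hbdd
  obtain ⟨j0⟩ := (inferInstance : Nonempty ι)
  set dv2 : ι → ℕ := fun j => dv j + if j = j0 then sSup S - d else 0 with hdv2
  have hsum2 : ∑ j, dv2 j = sSup S := by
    rw [hdv2]
    rw [Finset.sum_add_distrib, hdv, Finset.sum_ite_eq' Finset.univ j0 (fun _ => sSup S - d)]
    simp only [Finset.mem_univ, if_true]
    omega
  exact rowsLinIndep_mono (fun j => by simp [hdv2]) (hmem.2 dv2 hsum2)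

/-- lower bound for column-row reduced matrices derived from a digital
`(t,s)`-sequence: `ρ_m(C̃_1,…,C̃_s) ≥ max{0, m − w_s − t}`. -/
theorem rho_colRowReduced_ge (b m s t : ℕ) (hb : Nat.Prime b) (hm : 1 ≤ m) (hs : 1 ≤ s)
    (ht : t ≤ m) (C : Fin s → Matrix ℕ ℕ (ZMod b))
    (hseq : ∀ m', max t 1 ≤ m' → m' ≤ m →
      m' - t ≤ rho b m' (fun j => upperLeft (C j) m'))
    (w : Fin s → ℕ) (hw1 : w ⟨0, hs⟩ = 0) (hwmono : Monotone w) :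
    max 0 (m - w ⟨s - 1, by omega⟩ - t) ≤
      rho b m (fun j => colRowReduced (upperLeft (C j) m) (w j)) := by
  rw [Nat.zero_max]
  set ws := w ⟨s - 1, by omega⟩ with hws
  by_cases hd0 : m - ws - t = 0
  · rw [hd0]; exact Nat.zero_le _
  set d := m - ws - t with hd
  have hdpos : 1 ≤ d := Nat.one_le_iff_ne_zero.mpr hd0
  have hws_lt : ws + t < m := by omega
  set m' := m - ws with hm'
  have hm'le : m' ≤ m := Nat.sub_le _ _
  have hrho := hseq m' (by omega) hm'le
  have hd_eq : m' - t = d := by omega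
  rw [hd_eq] at hrho
  have hwj : ∀ j : Fin s, w j ≤ ws := by
    intro j
    exact hwmono (Fin.le_def.mpr (by have := j.isLt; simp; omega))
  unfold rho
  apply le_csSup ⟨m, fun x hx => hx.1⟩
  refine ⟨by omega, fun dv hdv => ?_⟩
  have : Nonempty (Fin s) := ⟨⟨0, hs⟩⟩
  have hli : rowsLinIndep b m' (fun j => upperLeft (C j) m') dv :=
    rowsLinIndep_of_le_rho hrho dv hdv
  have hsum_le : ∀ j, dv j ≤ d := fun j =>
    hdv ▸ Finset.single_le_sum (fun _ _ => Nat.zero_le _) (Finset.mem_univ j)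
  have hlt : ∀ p : {p : Fin s × Fin m // (p.2 : ℕ) < dv p.1}, (p.1.2 : ℕ) < m' := by
    intro p
    have h2 := p.2
    have := hsum_le p.1.1
    omega
  have hli2 := hli.comp
    (fun p : {p : Fin s × Fin m // (p.2 : ℕ) < dv p.1} =>
      (⟨(p.1.1, ⟨p.1.2, hlt p⟩), p.2⟩ : {p : Fin s × Fin m' // (p.2 : ℕ) < dv p.1}))
    (by
      rintro ⟨⟨j, i⟩, hp⟩ ⟨⟨j', i'⟩, hp'⟩ h
      simp only [Subtype.mk.injEq, Prod.mk.injEq, Fin.mk.injEq] at h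
      exact Subtype.ext (Prod.ext h.1 (Fin.ext h.2)))
  set φ : (Fin m → ZMod b) →ₗ[ZMod b] (Fin m' → ZMod b) :=
    LinearMap.funLeft (ZMod b) (ZMod b) (Fin.castLE hm'le) with hφ
  apply LinearIndependent.of_comp φ
  have key : ∀ p : {p : Fin s × Fin m // (p.2 : ℕ) < dv p.1},
      φ (colRowReduced (upperLeft (C p.1.1) m) (w p.1.1) p.1.2)
        = upperLeft (C p.1.1) m' ⟨p.1.2, hlt p⟩ := by
    rintro ⟨⟨j, i⟩, hp⟩
    have hp' : (i : ℕ) < dv j := hp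
    have h1 : w j ≤ ws := hwj j
    have h2 : dv j ≤ d := hsum_le j
    funext r
    have h3 : (r : ℕ) < m' := r.isLt
    have hmin : min m (w j) = w j := Nat.min_eq_right (by omega)
    simp only [hφ, LinearMap.funLeft_apply, colRowReduced, upperLeft, Matrix.of_apply,
      Function.comp]
    rw [if_pos]
    · rfl
    · rw [hmin]
      refine ⟨by omega, ?_⟩
      rw [Fin.coe_castLE]
      omega
  have heq : (⇑φ ∘ fun p : {p : Fin s × Fin m // (p.2 : ℕ) < dv p.1} =>
      colRowReduced (upperLeft (C p.1.1) m) (w p.1.1) p.1.2)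
      = fun p => upperLeft (C p.1.1) m' ⟨p.1.2, hlt p⟩ := funext key
  rw [heq]
  exact hli2
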